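/- In a ball code on a d-dimensional colorable ball B^v, for every edge e ∈ B^v_1 the operator X(e) = ∏_{δ ⊇ e} X_δ commutes with every Z-stabilizer Z(μ), μ ∈ B^v_{d−2}, and is not in the stabilizer group; hence it is a nontrivial logical X operator. -/

import Mathlib

/-!
Combinatorial framework for colorable balls in `d`-colexes.

A `d`-colex is a pure `d`-dimensional simplicial complex (faces are finsets of
vertices) whose vertices admit a proper `(d+1)`-coloring.  A colorable `d`-ball
`B^v` consists of the vertex `v` together with all simplices containing it; its
boundary `∂B^v` consists of the simplices contained in a top simplex of `B^v`
but not containing `v`.  We encode `B^v ∪ ∂B^v` as a `Ball`: a colex in which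
every face is contained in a `d`-simplex containing the distinguished vertex.

The associated ball code is the CSS code with a qubit on each `d`-simplex of
`B^v`, one X-stabilizer `X(v)` acting on all qubits, and a Z-stabilizer `Z(μ)`
for each `(d−2)`-simplex `μ ∈ B^v_{d−2}` acting on the `d`-simplices
containing `μ`.
-/

/-- A `d`-dimensional simplicial complex with properly `(d+1)`-colored
vertices. -/
structure DColex (V : Type*) [DecidableEq V] (d : ℕ) where
  faces : Finset (Finset V)
  nonempty_of_mem : ∀ f ∈ faces, f.Nonempty
  down_closed : ∀ f ∈ faces, ∀ g, g ⊆ f → g.Nonempty → g ∈ faces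
  card_le : ∀ f ∈ faces, f.card ≤ d + 1
  col : V → Fin (d + 1)
  proper : ∀ f ∈ faces, ∀ u ∈ f, ∀ w ∈ f, u ≠ w → col u ≠ col w

/-- A colorable `d`-ball `B^v` together with its boundary: a colex with a
distinguished vertex `v` such that every face is contained in some `d`-simplex
containing `v`. -/
structure Ball (V : Type*) [DecidableEq V] (d : ℕ) extends toColex : DColex V d where
  v : V
  v_mem : ({v} : Finset V) ∈ faces
  subset_top : ∀ f ∈ faces, ∃ δ ∈ faces, f ⊆ δ ∧ δ.card = d + 1 ∧ v ∈ δ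

namespace Ball

variable {V : Type*} [DecidableEq V] [Fintype V] {d : ℕ}

/-- `B^v_k`: the `k`-simplices of the ball (those containing `v`). -/
def Bk (B : Ball V d) (k : ℕ) : Finset (Finset V) :=
  B.faces.filter fun f => B.v ∈ f ∧ f.card = k + 1

/-- `∂B^v_k`: the `k`-simplices of the boundary (those not containing `v`). -/
def bdryk (B : Ball V d) (k : ℕ) : Finset (Finset V) :=
  B.faces.filter fun f => B.v ∉ f ∧ f.card = k + 1

/-- The Z-check matrix of the ball code: rows indexed by `(d−2)`-simplices
`μ ∈ B^v_{d−2}`, columns by qubits (`d`-simplices of `B^v`); the entry is `1`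
iff `μ ⊆ δ`. -/
def Zmat (B : Ball V d) :
    Matrix {μ // μ ∈ B.Bk (d - 2)} {δ // δ ∈ B.Bk d} (ZMod 2) :=
  fun μ δ => if μ.1 ⊆ δ.1 then 1 else 0

/-- The (Z-part of the) logical operator `X(e)` associated with an edge
`e ∈ B^v_1`: the indicator vector of the `d`-simplices containing `e`. -/
def xe (B : Ball V d) (e : Finset V) : {δ // δ ∈ B.Bk d} → ZMod 2 :=
  fun δ => if e ⊆ δ.1 then 1 else 0

/-- The weight-two operator `Z(λ)` associated with `λ ∈ B^v_{d−1}`: the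
indicator vector of the `d`-simplices containing `λ`. -/
def zlam (B : Ball V d) (lam : Finset V) : {δ // δ ∈ B.Bk d} → ZMod 2 :=
  fun δ => if lam ⊆ δ.1 then 1 else 0

/-- A Pauli with X-part `a` and Z-part `b` commutes with all stabilizers of the
ball code: `a` is orthogonal to every Z-check row and `b` is orthogonal to the
single all-ones X-check `X(v)`. -/
def InCentralizer (B : Ball V d) (a b : {δ // δ ∈ B.Bk d} → ZMod 2) : Prop :=
  (Zmat B).mulVec a = 0 ∧ (∑ δ, b δ) = 0

/-- A Pauli with X-part `a` and Z-part `b` lies in the stabilizer group of the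
ball code: `a` is in the span of the all-ones vector (the X-check `X(v)`) and
`b` is in the span of the Z-check rows. -/
def InStabilizer (B : Ball V d) (a b : {δ // δ ∈ B.Bk d} → ZMod 2) : Prop :=
  a ∈ Submodule.span (ZMod 2)
        ({fun _ => (1 : ZMod 2)} : Set ({δ // δ ∈ B.Bk d} → ZMod 2)) ∧
  b ∈ Submodule.span (ZMod 2) (Set.range fun μ => (Zmat B) μ)

/-- The weight of a Pauli with X-part `a` and Z-part `b`. -/
def wt (B : Ball V d) (a b : {δ // δ ∈ B.Bk d} → ZMod 2) : ℕ :=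
  (Finset.univ.filter fun δ => a δ ≠ 0 ∨ b δ ≠ 0).card

/-- The ball code has distance exactly `2`. -/
def DistanceTwo (B : Ball V d) : Prop :=
  (∀ a b, InCentralizer B a b → ¬ InStabilizer B a b → 2 ≤ wt B a b) ∧
  (∃ a b, InCentralizer B a b ∧ ¬ InStabilizer B a b ∧ wt B a b = 2)

/-- Each `(d−1)`-simplex of `B^v` lies in exactly two `d`-simplices. -/
def TwoSided (B : Ball V d) : Prop :=
  ∀ lam ∈ B.Bk (d - 1), ((B.Bk d).filter fun δ => lam ⊆ δ).card = 2

/-- The Even Support property: the number of `d`-simplices of `B^v` containing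
any given simplex of `B^v` of dimension `< d` is even. -/
def EvenSupport (B : Ball V d) : Prop :=
  ∀ f ∈ B.faces, B.v ∈ f → f.card ≤ d →
    Even (((B.Bk d).filter fun δ => f ⊆ δ).card)

end Ball

open Ball

/-- In a ball code on a `d`-dimensional colorable ball `B^v`,
for every edge `e ∈ B^v_1` the operator `X(e) = ∏_{δ ⊇ e} X_δ` commutes with
every Z-stabilizer `Z(μ)`, `μ ∈ B^v_{d−2}` (its X-part is annihilated by the
Z-check matrix), and it is not in the stabilizer group (whose X-parts are
spanned by the all-ones vector `X(v)`); hence it is a nontrivial logical X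
operator. -/
lemma card_filter_subtype {α : Type*} [DecidableEq α] (s : Finset α) (p : α → Prop)
    [DecidablePred p] :
    (Finset.univ.filter fun x : {a // a ∈ s} => p x.1).card = (s.filter p).card := by
  apply Finset.card_bij (fun x _ => x.1)
  · intro x hx
    simp only [Finset.mem_filter] at hx ⊢
    exact ⟨x.2, hx.2⟩
  · intro x hx y hy h
    exact Subtype.ext h
  · intro y hy
    simp only [Finset.mem_filter] at hy
    exact ⟨⟨y, hy.1⟩, by simp [hy.2], rfl⟩

theorem ball_code_logical_X {V : Type*} [DecidableEq V] [Fintype V] {d : ℕ}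
    (hd : 2 ≤ d) (B : Ball V d)
    (h2 : B.TwoSided) (hES : B.EvenSupport)
    (e : Finset V) (he : e ∈ B.Bk 1) :
    (Zmat B).mulVec (xe B e) = 0 ∧
    xe B e ∉ Submodule.span (ZMod 2)
      ({fun _ => (1 : ZMod 2)} : Set ({δ // δ ∈ B.Bk d} → ZMod 2)) := by
  simp only [Bk, Finset.mem_filter] at he
  obtain ⟨hef, hve, hecard⟩ := he
  constructor
  · funext μ
    obtain ⟨μval, hμ⟩ := μ
    simp only [Bk, Finset.mem_filter] at hμ
    obtain ⟨hμf, hvμ, hμcard⟩ := hμ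
    have key : ∀ δ : {δ // δ ∈ B.Bk d}, (μval ⊆ δ.1 ∧ e ⊆ δ.1) ↔ μval ∪ e ⊆ δ.1 := by
      intro δ; constructor
      · rintro ⟨h1, h2⟩; exact Finset.union_subset h1 h2
      · intro h; exact ⟨(Finset.subset_union_left).trans h, (Finset.subset_union_right).trans h⟩
    have hsum : (Zmat B).mulVec (xe B e) ⟨μval, by simp [Bk, Finset.mem_filter, hμf, hvμ, hμcard]⟩
        = ((Finset.univ.filter fun δ : {δ // δ ∈ B.Bk d} => μval ∪ e ⊆ δ.1).card : ZMod 2) := by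
      simp only [Matrix.mulVec, dotProduct, Zmat, xe, ite_mul, one_mul, zero_mul,
        mul_ite, mul_one, mul_zero]
      rw [← Finset.sum_boole]
      congr 1
      ext δ
      by_cases h1 : μval ⊆ δ.1 <;> by_cases h2 : e ⊆ δ.1 <;>
        simp [h1, h2, Finset.union_subset_iff]
    rw [Pi.zero_apply, hsum, card_filter_subtype]
    have heven : Even (((B.Bk d).filter fun δ => μval ∪ e ⊆ δ).card) := by
      rcases Finset.eq_empty_or_nonempty ((B.Bk d).filter fun δ => μval ∪ e ⊆ δ) with h | h
      · simp [h]
      · obtain ⟨δ, hδ⟩ := h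
        simp only [Finset.mem_filter, Bk] at hδ
        obtain ⟨⟨hδf, -, -⟩, hsub⟩ := hδ
        apply hES
        · exact B.down_closed δ hδf _ hsub ⟨B.v, Finset.mem_union_left _ hvμ⟩
        · exact Finset.mem_union_left _ hvμ
        · -- card (μval ∪ e) ≤ d
          have h1 : μval ∪ e = μval ∪ (e \ μval) := by
            rw [Finset.union_sdiff_self_eq_union]
          have h2 : (e \ μval).card ≤ 1 := by
            have : e \ μval ⊆ e.erase B.v := by
              intro x hx
              simp only [Finset.mem_sdiff] at hx
              exact Finset.mem_erase.mpr ⟨fun h => hx.2 (h ▸ hvμ), hx.1⟩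
            calc (e \ μval).card ≤ (e.erase B.v).card := Finset.card_le_card this
              _ = 1 := by rw [Finset.card_erase_of_mem hve, hecard]
          rw [h1, Finset.card_union_of_disjoint (Finset.disjoint_sdiff)]
          omega
    exact (ZMod.natCast_eq_zero_iff _ 2).mpr heven.two_dvd
  · -- not in span of all-ones
    -- get δ0 ∈ Bk d containing e
    obtain ⟨δ0, hδ0f, heδ0, hδ0card, hvδ0⟩ := B.subset_top e hef
    have hδ0 : δ0 ∈ B.Bk d := by simp [Bk, Finset.mem_filter, hδ0f, hvδ0, hδ0card]
    -- u : the other vertex of e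
    obtain ⟨u, hu, hune⟩ : ∃ u ∈ e, u ≠ B.v := by
      have : (e.erase B.v).Nonempty := by
        rw [← Finset.card_pos, Finset.card_erase_of_mem hve, hecard]; norm_num
      obtain ⟨u, hu⟩ := this
      exact ⟨u, Finset.mem_of_mem_erase hu, Finset.ne_of_mem_erase hu⟩
    -- λ = δ0 \ {u}
    set lam := δ0.erase u with hlam
    have hulam : u ∈ δ0 := heδ0 hu
    have hlamcard : lam.card = d := by
      rw [hlam, Finset.card_erase_of_mem hulam, hδ0card]; omega
    have hlamf : lam ∈ B.faces := by
      apply B.down_closed δ0 hδ0f _ (Finset.erase_subset _ _)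
      rw [← Finset.card_pos, hlamcard]; omega
    have hvlam : B.v ∈ lam := Finset.mem_erase.mpr ⟨hune.symm, hvδ0⟩
    have hlamBk : lam ∈ B.Bk (d - 1) := by
      simp only [Bk, Finset.mem_filter]
      exact ⟨hlamf, hvlam, by omega⟩
    have hcard2 := h2 lam hlamBk
    -- there exists δ1 ≠ δ0 in Bk d containing lam
    have hδ0mem : δ0 ∈ (B.Bk d).filter fun δ => lam ⊆ δ :=
      Finset.mem_filter.mpr ⟨hδ0, Finset.erase_subset _ _⟩
    obtain ⟨δ1, hδ1mem, hne⟩ : ∃ δ1 ∈ (B.Bk d).filter (fun δ => lam ⊆ δ), δ1 ≠ δ0 := by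
      by_contra h
      push_neg at h
      have : (B.Bk d).filter (fun δ => lam ⊆ δ) ⊆ {δ0} := fun x hx => Finset.mem_singleton.mpr (h x hx)
      have := Finset.card_le_card this
      simp [hcard2] at this
    obtain ⟨hδ1, hlamδ1⟩ := Finset.mem_filter.mp hδ1mem
    have huδ1 : u ∉ δ1 := by
      intro huδ1
      have hδ0sub : δ0 ⊆ δ1 := by
        intro x hx
        by_cases hxu : x = u
        · exact hxu ▸ huδ1
        · exact hlamδ1 (Finset.mem_erase.mpr ⟨hxu, hx⟩)
      have hδ1card : δ1.card = d + 1 := (Finset.mem_filter.mp hδ1).2.2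
      exact hne (Finset.eq_of_subset_of_card_le hδ0sub (by rw [hδ1card, hδ0card])).symm
    have heδ1 : ¬ e ⊆ δ1 := fun h => huδ1 (h hu)
    -- now derive contradiction
    intro hmem
    rw [Submodule.mem_span_singleton] at hmem
    obtain ⟨c, hc⟩ := hmem
    have h0 : xe B e ⟨δ0, hδ0⟩ = 1 := by simp [xe, heδ0]
    have h1 : xe B e ⟨δ1, hδ1⟩ = 0 := by simp [xe, heδ1]
    have hc0 := congrFun hc ⟨δ0, hδ0⟩
    have hc1 := congrFun hc ⟨δ1, hδ1⟩
    simp only [Pi.smul_apply, smul_eq_mul, mul_one, h0, h1] at hc0 hc1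
    rw [hc1] at hc0
    exact one_ne_zero hc0.symm
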